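/- Let U = {a₁,…,b₁} × ⋯ × {a_d,…,b_d} ⊂ ℤ^d with all a_i, b_i finite, let p : ℤ^d → ℝ be a pmf supported on U, let τ = (τ⁽¹⁾,…,τ⁽ᵈ⁾) with each τ⁽ⁱ⁾ : U → ℝ, and let f : ℤ^d → ℝ vanish at every point k ∈ U with k_i = a_i or k_i = b_i for some i. Then for each coordinate i ∈ {1,…,d}: ∑_{k∈U} (f(k + e_i) τ⁽ⁱ⁾(k + e_i) p(k + e_i) − f(k) τ⁽ⁱ⁾(k) p(k)) = 0, where e_i is the i-th standard basis vector (with the convention that f, τ⁽ⁱ⁾, p are 0 outside U as appropriate). Equivalently, E[[𝒜f(X)]_i] = 0 for X distributed according to p. -/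

import Mathlib

/-- Multivariate discrete Stein identity on a finite rectangle
`U = {a₁,…,b₁} × ⋯ × {a_d,…,b_d} ⊂ ℤ^d`: for a pmf `p` supported on `U`, vector field
`τ`, and `f` vanishing on the boundary of `U`, each coordinate of the expected Stein
operator vanishes (telescoping in coordinate `i`). -/
theorem multivariate_discrete_stein_identity
    (d : ℕ) (hd : 0 < d) (a b : Fin d → ℤ) (hab : ∀ i, a i < b i)
    (p : (Fin d → ℤ) → ℝ) (τ : Fin d → (Fin d → ℤ) → ℝ) (f : (Fin d → ℤ) → ℝ)
    (hpos : ∀ k ∈ Fintype.piFinset fun i => Finset.Icc (a i) (b i), 0 < p k)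
    (hsupp : ∀ k, k ∉ (Fintype.piFinset fun i => Finset.Icc (a i) (b i)) → p k = 0)
    (hsum : ∑ k ∈ Fintype.piFinset (fun i => Finset.Icc (a i) (b i)), p k = 1)
    (hbd : ∀ k ∈ Fintype.piFinset fun i => Finset.Icc (a i) (b i),
      (∃ i, k i = a i ∨ k i = b i) → f k = 0) :
    ∀ i : Fin d,
      ∑ k ∈ Fintype.piFinset (fun j => Finset.Icc (a j) (b j)),
        (f (Function.update k i (k i + 1)) * τ i (Function.update k i (k i + 1)) *
            p (Function.update k i (k i + 1)) -
          f k * τ i k * p k) = 0 := by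
  intro i
  set S := Fintype.piFinset fun j => Finset.Icc (a j) (b j) with hSdef
  set T := Fintype.piFinset fun j => Finset.Icc (a j) (if j = i then b j + 1 else b j)
    with hTdef
  set g : (Fin d → ℤ) → ℝ := fun k => f k * τ i k * p k with hgdef
  have hST : S ⊆ T := by
    intro k hk
    simp only [hSdef, hTdef, Fintype.mem_piFinset, Finset.mem_Icc] at hk ⊢
    intro j
    obtain ⟨h1, h2⟩ := hk j
    refine ⟨h1, ?_⟩
    split <;> omega
  have h2 : ∑ k ∈ S, g k = ∑ k ∈ T, g k := by
    apply Finset.sum_subset hST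
    intro k hkT hkS
    have : p k = 0 := hsupp k hkS
    simp [hgdef, this]
  have hinj : ∀ x ∈ S, ∀ y ∈ S,
      Function.update x i (x i + 1) = Function.update y i (y i + 1) → x = y := by
    intro k hk m hm h
    funext j
    by_cases hj : j = i
    · subst hj
      have := congrFun h j
      simpa using this
    · have := congrFun h j
      rwa [Function.update_of_ne hj, Function.update_of_ne hj] at this
  have h1 : ∑ k ∈ S, g (Function.update k i (k i + 1)) = ∑ k ∈ T, g k := by
    rw [← Finset.sum_image (s := S) (f := g)
      (g := fun k => Function.update k i (k i + 1)) hinj]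
    refine Finset.sum_subset ?_ ?_
    · intro k hk
      simp only [Finset.mem_image] at hk
      obtain ⟨m, hm, rfl⟩ := hk
      simp only [hSdef, Fintype.mem_piFinset, Finset.mem_Icc] at hm
      simp only [hTdef, Fintype.mem_piFinset, Finset.mem_Icc]
      intro j
      by_cases hj : j = i
      · subst hj
        simp only [Function.update_self, eq_self_iff_true, if_true]
        obtain ⟨h1, h2⟩ := hm j
        have := hab j
        omega
      · rw [Function.update_of_ne hj]
        obtain ⟨h1, h2⟩ := hm j
        refine ⟨h1, ?_⟩
        split <;> omega
    · intro k hkT hkim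
      -- k i = a i
      have hki : k i = a i := by
        by_contra hne
        apply hkim
        simp only [Finset.mem_image]
        refine ⟨Function.update k i (k i - 1), ?_, ?_⟩
        · simp only [hSdef, hTdef, Fintype.mem_piFinset, Finset.mem_Icc] at hkT ⊢
          intro j
          by_cases hj : j = i
          · subst hj
            simp only [Function.update_self]
            obtain ⟨hl, hr⟩ := hkT j
            rw [if_pos rfl] at hr
            omega
          · rw [Function.update_of_ne hj]
            obtain ⟨hl, hr⟩ := hkT j
            rw [if_neg hj] at hr
            exact ⟨hl, hr⟩
        · funext j
          by_cases hj : j = i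
          · subst hj
            simp
          · simp [Function.update_of_ne hj]
      have hkS : k ∈ S := by
        simp only [hSdef, hTdef, Fintype.mem_piFinset, Finset.mem_Icc] at hkT ⊢
        intro j
        obtain ⟨hl, hr⟩ := hkT j
        by_cases hj : j = i
        · subst hj
          have := hab j
          omega
        · rw [if_neg hj] at hr; exact ⟨hl, hr⟩
      have : f k = 0 := hbd k hkS ⟨i, Or.inl hki⟩
      simp [hgdef, this]
  rw [Finset.sum_sub_distrib]
  show (∑ k ∈ S, g (Function.update k i (k i + 1))) - ∑ k ∈ S, g k = 0
  rw [h1, h2, sub_self]
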